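/- Let G_σ be a sign-connected signed graph with at least three vertices whose underlying graph is 2-connected (a block). Then G_σ has no sign articulation vertex if and only if G_σ − x is unbalanced for every vertex x. -/

import Mathlib

namespace SignedGraph

variable {V : Type*}

/-- The sign of a walk in a signed graph: the product of its edge signs. -/
def walkSign {G : SimpleGraph V} (σ : V → V → ℤˣ) : {u v : V} → G.Walk u v → ℤˣ
  | _, _, SimpleGraph.Walk.nil => 1
  | u, _, SimpleGraph.Walk.cons (v := w) _ p => σ u w * walkSign σ p

/-- A signed graph is balanced if every cycle has positive sign. -/
def Balanced (G : SimpleGraph V) (σ : V → V → ℤˣ) : Prop :=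
  ∀ ⦃u : V⦄ (c : G.Walk u u), c.IsCycle → walkSign σ c = 1

/-- Sign connection: every two distinct vertices are joined both by a
positive and by a negative walk. -/
def SignConnected (G : SimpleGraph V) (σ : V → V → ℤˣ) : Prop :=
  ∀ x y : V, x = y ∨
    ((∃ p : G.Walk x y, walkSign σ p = 1) ∧ (∃ p : G.Walk x y, walkSign σ p = -1))

open Classical in
/-- Switching by a vertex subset `W`: negate the signs of edges with exactly
one endpoint in `W`. -/
noncomputable def switchSign (W : Set V) (σ : V → V → ℤˣ) (u v : V) : ℤˣ :=
  if Xor' (u ∈ W) (v ∈ W) then -σ u v else σ u v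

end SignedGraph

open SignedGraph

namespace SignedGraph
variable {V : Type*}
open SimpleGraph Walk

section lemmas
variable {G : SimpleGraph V} {σ : V → V → ℤˣ}

lemma walkSign_cons {u v w : V} (h : G.Adj u v) (p : G.Walk v w) :
    walkSign σ (Walk.cons h p) = σ u v * walkSign σ p := rfl

lemma walkSign_append {u v w : V} (p : G.Walk u v) (q : G.Walk v w) :
    walkSign σ (p.append q) = walkSign σ p * walkSign σ q := by
  induction p with
  | nil => simp [walkSign]
  | cons h p ih => simp [walkSign_cons, ih, mul_assoc]

lemma walkSign_reverse (hσ : ∀ u v : V, σ u v = σ v u) {u v : V} (p : G.Walk u v) :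
    walkSign σ p.reverse = walkSign σ p := by
  induction p with
  | nil => rfl
  | cons h p ih =>
      rw [Walk.reverse_cons, walkSign_append, ih, walkSign_cons]
      simp [walkSign, hσ _ _, mul_comm]

lemma walkSign_eq_prod {u v : V} (p : G.Walk u v) :
    walkSign σ p = (p.darts.map (fun d => σ d.toProd.1 d.toProd.2)).prod := by
  induction p with
  | nil => rfl
  | cons h p ih => simp [walkSign_cons, ih]

lemma walkSign_rotate [DecidableEq V] {u w : V} (c : G.Walk u u) (h : w ∈ c.support) :
    walkSign σ (c.rotate w h) = walkSign σ c := by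
  rw [walkSign_eq_prod, walkSign_eq_prod]
  exact ((c.rotate_darts w h).map _).perm.prod_eq

lemma closedWalkSign [DecidableEq V] (hσ : ∀ u v : V, σ u v = σ v u) (hbal : Balanced G σ) :
    ∀ (n : ℕ) (u : V) (c : G.Walk u u), c.length ≤ n → walkSign σ c = 1 := by
  classical
  intro n
  induction n using Nat.strong_induction_on with
  | _ n IH =>
    intro u c hc
    cases c with
    | nil => rfl
    | @cons _ v _ h p =>
      by_cases hnd : p.support.Nodup
      · by_cases he : s(u, v) ∈ p.edges
        · cases p with
          | nil => simp at he
          | @cons _ y _ h2 p2 =>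
            rw [Walk.edges_cons, List.mem_cons] at he
            rcases he with he | he
            · have hy : u = y := by
                rw [Sym2.eq_iff] at he
                rcases he with ⟨h1, h2'⟩ | ⟨h1, h2'⟩
                · exact absurd h1 h.ne
                · exact h1
              subst hy
              have hp2 : walkSign σ p2 = 1 := by
                refine IH p2.length ?_ u p2 le_rfl
                simp only [Walk.length_cons] at hc
                omega
              rw [walkSign_cons, walkSign_cons, hp2, mul_one, hσ v u]
              exact Int.units_mul_self _
            · exfalso
              have hv : v ∈ p2.support := Walk.fst_mem_support_of_mem_edges p2
                (by rwa [Sym2.eq_swap] at he)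
              simp only [Walk.support_cons, List.nodup_cons] at hnd
              exact hnd.1 hv
        · have hcyc : (Walk.cons h p).IsCycle :=
            (Walk.cons_isCycle_iff p h).mpr ⟨(Walk.isPath_def _).mpr hnd, he⟩
          exact hbal _ hcyc
      · obtain ⟨w, hw⟩ := List.exists_duplicate_iff_not_nodup.mpr hnd
        have hcount : 2 ≤ p.support.count w := List.duplicate_iff_two_le_count.mp hw
        have hwmem : w ∈ (Walk.cons h p).support := by
          simp [Walk.support_cons, hw.mem]
        have key : ∀ (d : G.Walk w w), d.length ≤ n →
            2 ≤ d.support.tail.count w → walkSign σ d = 1 := by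
          intro d hdlen hdcnt
          cases d with
          | nil => simp at hdcnt
          | @cons _ x _ h' p' =>
            have htail : (Walk.cons h' p').support.tail = p'.support := by
              simp [Walk.support_cons]
            rw [htail] at hdcnt
            have hwp' : w ∈ p'.support := by
              have : 0 < p'.support.count w := by omega
              exact List.count_pos_iff.mp this
            have hspec := p'.take_spec hwp'
            have hq1 : (p'.takeUntil w hwp').support.count w = 1 :=
              p'.count_support_takeUntil_eq_one hwp'
            have hcnteq : p'.support.count w =
                (p'.takeUntil w hwp').support.count w +
                (p'.dropUntil w hwp').support.tail.count w := by
              conv_lhs => rw [← hspec]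
              rw [Walk.support_append, List.count_append]
            have hr1 : 1 ≤ (p'.dropUntil w hwp').support.tail.count w := by omega
            have hrlen : 1 ≤ (p'.dropUntil w hwp').length := by
              have hle : (p'.dropUntil w hwp').support.tail.count w ≤
                  (p'.dropUntil w hwp').support.tail.length := List.count_le_length
              have h2 := (p'.dropUntil w hwp').length_support
              have h3 : (p'.dropUntil w hwp').support.tail.length =
                  (p'.dropUntil w hwp').support.length - 1 := List.length_tail
              omega
            have hlensum : p'.length =
                (p'.takeUntil w hwp').length + (p'.dropUntil w hwp').length := by
              conv_lhs => rw [← hspec]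
              rw [Walk.length_append]
            have hq : walkSign σ (Walk.cons h' (p'.takeUntil w hwp')) = 1 := by
              refine IH _ ?_ w _ le_rfl
              simp only [Walk.length_cons] at hdlen ⊢
              omega
            have hr : walkSign σ (p'.dropUntil w hwp') = 1 := by
              refine IH _ ?_ w _ le_rfl
              simp only [Walk.length_cons] at hdlen
              omega
            calc walkSign σ (Walk.cons h' p')
                = σ w x * walkSign σ p' := rfl
              _ = σ w x * (walkSign σ (p'.takeUntil w hwp') *
                    walkSign σ (p'.dropUntil w hwp')) := by
                  conv_lhs => rw [← hspec]
                  rw [walkSign_append]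
              _ = walkSign σ (Walk.cons h' (p'.takeUntil w hwp')) *
                    walkSign σ (p'.dropUntil w hwp') := by
                  rw [walkSign_cons, mul_assoc]
              _ = 1 := by rw [hq, hr, mul_one]
        have hdlen : ((Walk.cons h p).rotate w hwmem).length = (Walk.cons h p).length := by
          have := ((Walk.rotate_darts (Walk.cons h p) w hwmem).perm.length_eq)
          simpa [Walk.length_darts] using this
        have hdcnt : 2 ≤ ((Walk.cons h p).rotate w hwmem).support.tail.count w := by
          have := (Walk.support_rotate (Walk.cons h p) w hwmem).perm.count_eq w
          rw [this]
          simpa [Walk.support_cons] using hcount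
        have := key _ (by omega) hdcnt
        rwa [walkSign_rotate] at this

lemma pointwise (hσ : ∀ u v : V, σ u v = σ v u) (hconn : G.Connected)
    (htwo : ∃ a b : V, a ≠ b) :
    SignConnected G σ ↔ ¬ Balanced G σ := by
  classical
  constructor
  · intro hsc hbal
    obtain ⟨a, b, hab⟩ := htwo
    rcases hsc a b with h | ⟨⟨p, hp⟩, ⟨q, hq⟩⟩
    · exact hab h
    · have := closedWalkSign hσ hbal (p.append q.reverse).length a (p.append q.reverse) le_rfl
      rw [walkSign_append, walkSign_reverse hσ, hp, hq] at this
      norm_num at this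
  · intro hub a b
    by_cases hab : a = b
    · exact Or.inl hab
    refine Or.inr ?_
    unfold Balanced at hub
    push_neg at hub
    obtain ⟨w, c, hcyc, hc⟩ := hub
    have hcneg : walkSign σ c = -1 := (Int.units_eq_one_or _).resolve_left hc
    have r1 : G.Walk a w := (hconn.preconnected a w).some
    have r2 : G.Walk w b := (hconn.preconnected w b).some
    have hB : walkSign σ (r1.append (c.append r2)) =
        - walkSign σ (r1.append r2) := by
      rw [walkSign_append, walkSign_append, walkSign_append, hcneg]
      rw [neg_one_mul, mul_neg]
    rcases Int.units_eq_one_or (walkSign σ (r1.append r2)) with h | h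
    · exact ⟨⟨r1.append r2, h⟩, ⟨r1.append (c.append r2), by rw [hB, h]⟩⟩
    · exact ⟨⟨r1.append (c.append r2), by rw [hB, h]; norm_num⟩, ⟨r1.append r2, h⟩⟩

end lemmas
end SignedGraph


/-- A sign-connected block with at least three vertices has no sign
articulation vertex iff deleting any vertex leaves an unbalanced signed
graph. -/
theorem stmt_13 {V : Type*} [Fintype V] (G : SimpleGraph V) (σ : V → V → ℤˣ)
    (hσ : ∀ u v : V, σ u v = σ v u) (hsc : SignConnected G σ)
    (hcard : 3 ≤ Fintype.card V) (hconn : G.Connected)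
    (hblock : ∀ x : V, (G.induce {x}ᶜ).Connected) :
    (∀ x : V, SignConnected (G.induce {x}ᶜ) (fun a b => σ a.1 b.1)) ↔
      ∀ x : V, ¬ Balanced (G.induce {x}ᶜ) (fun a b => σ a.1 b.1) := by
  classical
  have htwo : ∀ x : V, ∃ a b : ({x}ᶜ : Set V), a ≠ b := by
    intro x
    obtain ⟨a, b, c, hab, hac, hbc⟩ := Fintype.two_lt_card_iff.mp hcard
    by_cases hax : a = x
    · exact ⟨⟨b, Set.mem_compl_singleton_iff.mpr (by rintro rfl; exact hab hax)⟩,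
        ⟨c, Set.mem_compl_singleton_iff.mpr (by rintro rfl; exact hac hax)⟩,
        by simpa [Subtype.ext_iff] using hbc⟩
    · by_cases hbx : b = x
      · exact ⟨⟨a, Set.mem_compl_singleton_iff.mpr hax⟩,
          ⟨c, Set.mem_compl_singleton_iff.mpr (by rintro rfl; exact hbc hbx)⟩,
          by simpa [Subtype.ext_iff] using hac⟩
      · exact ⟨⟨a, Set.mem_compl_singleton_iff.mpr hax⟩,
          ⟨b, Set.mem_compl_singleton_iff.mpr hbx⟩,
          by simpa [Subtype.ext_iff] using hab⟩
  have key : ∀ x : V, SignConnected (G.induce {x}ᶜ) (fun a b => σ a.1 b.1) ↔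
      ¬ Balanced (G.induce {x}ᶜ) (fun a b => σ a.1 b.1) := fun x =>
    pointwise (fun u v => hσ u.1 v.1) (hblock x) (htwo x)
  exact ⟨fun H x => (key x).mp (H x), fun H x => (key x).mpr (H x)⟩
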